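/- In the iterative patching algorithm with step size η_t = err_t/C, each update strictly decreases the Brier score by at least err_t²/C: L(f^{(t+1)}) - L(f^{(t)}) ≤ -err_t²/C, where err_t = E[⟨f^{(t)}(X) - Y, w_t(f^{(t)}(X))⟩] and the witness satisfies ‖w_t(p)‖₂² ≤ C pointwise. Consequently, since the Brier score L(f) = E‖Y - f(X)‖₂² lies in [0,2], the algorithm terminates (err_t ≤ ε) in at most 2C/ε² iterations. -/

import Mathlib

open MeasureTheory Set RealInnerProductSpace

/-- each iteration of the patching algorithm with stepsize `err_t/C` decreases the
Brier score by at least `err_t²/C`; consequently some iteration `t ≤ 2C/ε²` has `err_t ≤ ε`. -/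
theorem stmt_7 {Ω 𝒳 : Type*} [MeasurableSpace Ω] (μ : Measure Ω) [IsProbabilityMeasure μ]
    (C : ℕ) (hC : 0 < C)
    (Xv : Ω → 𝒳) (Yv : Ω → EuclideanSpace ℝ (Fin C))
    (hY : ∀ ω, ∃ i : Fin C, Yv ω = EuclideanSpace.single i 1)
    (S : Set (EuclideanSpace ℝ (Fin C)))
    (hS : S = {p | (∀ i, 0 ≤ p i) ∧ ∑ i, p i = 1})
    (proj : EuclideanSpace ℝ (Fin C) → EuclideanSpace ℝ (Fin C))
    (hprojS : ∀ z, proj z ∈ S)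
    (hproj : ∀ z y, y ∈ S → ‖y - proj z‖ ≤ ‖y - z‖)
    (f : ℕ → 𝒳 → EuclideanSpace ℝ (Fin C)) (hf : ∀ t x, f t x ∈ S)
    (w : ℕ → EuclideanSpace ℝ (Fin C) → EuclideanSpace ℝ (Fin C))
    (hw : ∀ t p i, w t p i ∈ Icc (-1 : ℝ) 1)
    (err : ℕ → ℝ)
    (herr : ∀ t, err t = ∫ ω, ⟪f t (Xv ω) - Yv ω, w t (f t (Xv ω))⟫ ∂μ)
    (herrint : ∀ t, Integrable (fun ω => ⟪f t (Xv ω) - Yv ω, w t (f t (Xv ω))⟫) μ)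
    (hrec : ∀ t x, f (t + 1) x = proj (f t x - (err t / (C : ℝ)) • w t (f t x)))
    (L : (𝒳 → EuclideanSpace ℝ (Fin C)) → ℝ)
    (hL : ∀ g, L g = ∫ ω, ‖Yv ω - g (Xv ω)‖ ^ 2 ∂μ)
    (hLint : ∀ t, Integrable (fun ω => ‖Yv ω - f t (Xv ω)‖ ^ 2) μ) :
    (∀ t, L (f (t + 1)) - L (f t) ≤ -(err t) ^ 2 / (C : ℝ)) ∧
    (∀ ε : ℝ, 0 < ε → ∃ t : ℕ, (t : ℝ) ≤ 2 * (C : ℝ) / ε ^ 2 ∧ err t ≤ ε) := by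
  have hCR : (0:ℝ) < C := by exact_mod_cast hC
  have hYS : ∀ ω, Yv ω ∈ S := by
    intro ω
    obtain ⟨i, hi⟩ := hY ω
    rw [hS, hi]
    constructor
    · intro j
      by_cases h : j = i <;> simp [EuclideanSpace.single_apply, h]
    · simp [EuclideanSpace.single_apply]
  -- squared norm of witness is at most C
  have hwnorm : ∀ t p, ‖w t p‖ ^ 2 ≤ (C : ℝ) := by
    intro t p
    rw [EuclideanSpace.norm_eq, Real.sq_sqrt (by positivity)]
    calc ∑ i, ‖w t p i‖ ^ 2 ≤ ∑ _i : Fin C, (1:ℝ) := by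
          refine Finset.sum_le_sum fun i _ => ?_
          have h := hw t p i
          rw [Real.norm_eq_abs, sq_abs]
          nlinarith [h.1, h.2]
      _ = C := by simp
  -- the per-step decrease
  have hstep : ∀ t, L (f (t + 1)) - L (f t) ≤ -(err t) ^ 2 / (C : ℝ) := by
    intro t
    set η := err t / (C:ℝ) with hη
    have hpt : ∀ ω, ‖Yv ω - f (t+1) (Xv ω)‖ ^ 2 ≤
        ‖Yv ω - f t (Xv ω)‖ ^ 2 +
          (-(2*η)) * ⟪f t (Xv ω) - Yv ω, w t (f t (Xv ω))⟫ + η^2 * C := by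
      intro ω
      set p := f t (Xv ω) with hp
      set v := w t p with hv
      have h1 : ‖Yv ω - f (t+1) (Xv ω)‖ ≤ ‖Yv ω - (p - η • v)‖ := by
        rw [hrec t (Xv ω)]; exact hproj _ _ (hYS ω)
      have h2 : ‖Yv ω - f (t+1) (Xv ω)‖ ^ 2 ≤ ‖Yv ω - (p - η • v)‖ ^ 2 :=
        pow_le_pow_left₀ (norm_nonneg _) h1 2
      have h3 : Yv ω - (p - η • v) = (Yv ω - p) + η • v := by abel
      rw [h3, norm_add_sq_real] at h2
      have h4 : ⟪Yv ω - p, η • v⟫ = -(η * ⟪p - Yv ω, v⟫) := by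
        rw [real_inner_smul_right, ← neg_sub, inner_neg_left]; ring
      have h5 : ‖η • v‖ ^ 2 = η^2 * ‖v‖^2 := by
        rw [norm_smul, mul_pow, Real.norm_eq_abs, sq_abs]
      have h6 : η^2 * ‖v‖^2 ≤ η^2 * C := by
        have := hwnorm t p
        nlinarith [sq_nonneg η]
      rw [h4, h5] at h2
      calc ‖Yv ω - f (t+1) (Xv ω)‖ ^ 2
          ≤ ‖Yv ω - p‖^2 + 2 * -(η * ⟪p - Yv ω, v⟫) + η^2 * ‖v‖^2 := h2
        _ ≤ ‖Yv ω - p‖^2 + (-(2*η)) * ⟪p - Yv ω, v⟫ + η^2 * C := by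
            rw [hp, hv]; nlinarith [h6]
    have hRint : Integrable (fun ω => ‖Yv ω - f t (Xv ω)‖ ^ 2 +
        (-(2*η)) * ⟪f t (Xv ω) - Yv ω, w t (f t (Xv ω))⟫ + η^2 * C) μ :=
      ((hLint t).add ((herrint t).const_mul _)).add (integrable_const _)
    have hint : L (f (t+1)) ≤ ∫ ω, (‖Yv ω - f t (Xv ω)‖ ^ 2 +
        (-(2*η)) * ⟪f t (Xv ω) - Yv ω, w t (f t (Xv ω))⟫ + η^2 * C) ∂μ := by
      rw [hL]
      exact integral_mono (hLint (t+1)) hRint hpt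
    have hI1 : Integrable (fun ω => ‖Yv ω - f t (Xv ω)‖ ^ 2 +
        (-(2*η)) * ⟪f t (Xv ω) - Yv ω, w t (f t (Xv ω))⟫) μ :=
      (hLint t).add ((herrint t).const_mul _)
    simp only [integral_add hI1 (integrable_const _),
        integral_add (hLint t) ((herrint t).const_mul _),
        integral_const_mul, integral_const, probReal_univ, one_smul] at hint
    rw [← herr t, ← hL (f t)] at hint
    have : (-(2*η)) * err t + η^2 * C = -(err t)^2 / C := by
      rw [hη]; field_simp; ring
    linarith [hint, this ▸ le_refl ((-(2*η)) * err t + η^2 * C)]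
  refine ⟨hstep, ?_⟩
  -- L nonneg and L (f 0) ≤ 2
  have hLnonneg : ∀ t, 0 ≤ L (f t) := by
    intro t
    rw [hL]
    exact integral_nonneg fun ω => by positivity
  have hL2 : L (f 0) ≤ 2 := by
    rw [hL]
    calc ∫ ω, ‖Yv ω - f 0 (Xv ω)‖ ^ 2 ∂μ ≤ ∫ _ω, (2:ℝ) ∂μ := by
          refine integral_mono (hLint 0) (integrable_const _) fun ω => ?_
          obtain ⟨i, hi⟩ := hY ω
          have hfS := hf 0 (Xv ω)
          rw [hS] at hfS
          obtain ⟨hpos, hsum⟩ := hfS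
          set p := f 0 (Xv ω) with hp
          have hnp : ‖p‖^2 ≤ 1 := by
            rw [EuclideanSpace.norm_eq, Real.sq_sqrt (by positivity)]
            calc ∑ j, ‖p j‖ ^ 2 ≤ ∑ j, p j := by
                  refine Finset.sum_le_sum fun j _ => ?_
                  have h1 : p j ≤ 1 := by
                    have : ∑ k ∈ Finset.univ.erase j, p k ≥ 0 :=
                      Finset.sum_nonneg fun k _ => hpos k
                    have := Finset.add_sum_erase Finset.univ p (Finset.mem_univ j)
                    linarith [hsum ▸ this]
                  rw [Real.norm_eq_abs, sq_abs]
                  nlinarith [hpos j]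
              _ = 1 := hsum
          have hin : ⟪Yv ω, p⟫ = p i := by
            rw [hi]
            rw [real_inner_comm, EuclideanSpace.inner_single_right]
            simp
          rw [norm_sub_sq_real, hin]
          have hY1 : ‖Yv ω‖^2 = 1 := by
            rw [hi, EuclideanSpace.norm_single]; norm_num
          nlinarith [hpos i]
      _ = 2 := by simp
  -- telescoping
  have htel : ∀ n, L (f n) - L (f 0) ≤ -∑ t ∈ Finset.range n, (err t)^2 / C := by
    intro n
    have := Finset.sum_range_sub (fun t => L (f t)) n
    calc L (f n) - L (f 0) = ∑ t ∈ Finset.range n, (L (f (t+1)) - L (f t)) := this.symm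
      _ ≤ ∑ t ∈ Finset.range n, (-(err t)^2 / C) := Finset.sum_le_sum fun t _ => hstep t
      _ = -∑ t ∈ Finset.range n, (err t)^2 / C := by
          rw [← Finset.sum_neg_distrib]
          congr 1; ext t; ring
  intro ε hε
  by_contra hcon
  push_neg at hcon
  set n := ⌊2 * (C:ℝ) / ε^2⌋₊ with hn
  have hsumlb : ∑ t ∈ Finset.range (n+1), (err t)^2 / C ≥ (n+1) * (ε^2 / C) := by
    calc ∑ t ∈ Finset.range (n+1), (err t)^2 / C ≥ ∑ _t ∈ Finset.range (n+1), (ε^2/C) := by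
          refine Finset.sum_le_sum fun t ht => ?_
          have htn : (t:ℝ) ≤ 2 * (C:ℝ) / ε^2 := by
            have h1 : t ≤ n := Nat.lt_succ_iff.mp (Finset.mem_range.mp ht)
            calc (t:ℝ) ≤ n := by exact_mod_cast h1
              _ ≤ 2 * (C:ℝ) / ε^2 := Nat.floor_le (by positivity)
          have := hcon t htn
          have herrpos : ε < err t := this
          have : ε^2 ≤ (err t)^2 := by nlinarith
          exact (div_le_div_iff_of_pos_right hCR).mpr this
      _ = (n+1) * (ε^2/C) := by
          rw [Finset.sum_const, Finset.card_range]; push_cast; ring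
  have hbig : ((n:ℝ)+1) * (ε^2/C) > 2 := by
    have h1 : 2 * (C:ℝ) / ε^2 < (n:ℝ) + 1 := Nat.lt_floor_add_one _
    have h2 : (0:ℝ) < ε^2 / C := by positivity
    calc ((n:ℝ)+1) * (ε^2/C) > (2 * (C:ℝ) / ε^2) * (ε^2/C) := by
          exact mul_lt_mul_of_pos_right h1 h2
      _ = 2 := by field_simp
  have := htel (n+1)
  have h0 := hLnonneg (n+1)
  push_cast at hsumlb
  linarith
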